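/- Let (γ_1, γ_2) be a bad pair in the root system C_n: γ_1 = α_i+...+α_{j−1}+2(α_j+...+α_{n−1})+β and γ_2 = 2(α_i+...+α_{n−1})+β with 1 ≤ i < j ≤ n. Let ξ be a positive root with ht(γ_1) ≤ ht(ξ) < ht(γ_2) such that s_{γ_2}(ξ) is a negative root. Then there exists an integer p with i < p ≤ j such that ξ = α_i + ... + α_{p−1} + 2(α_p + ... + α_{n−1}) + β. -/
import Mathlib


namespace CnRoots

/-- The standard basis vector `e_i` of `ℚ^n` (`1`-indexed: `1 ≤ i ≤ n`). -/
def e (n i : ℕ) : Fin n → ℚ := fun j => if (j : ℕ) + 1 = i then 1 else 0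

/-- The standard inner product on `ℚ^n`. -/
def inn {n : ℕ} (x y : Fin n → ℚ) : ℚ := ∑ j, x j * y j

/-- The pairing `⟨x, y^∨⟩ = 2(x,y)/(y,y)` of a vector with the coroot of `y`. -/
def pairing {n : ℕ} (x y : Fin n → ℚ) : ℚ := 2 * inn x y / inn y y

/-- Height of a root of `C_n`, computed by pairing with `ρ^∨`. -/
def ht {n : ℕ} (x : Fin n → ℚ) : ℚ := ∑ j, x j * ((n : ℚ) - (j : ℚ) - 1 / 2)

/-- Positive roots of `C_n`: `e_i − e_j` and `e_i + e_j` for `1 ≤ i < j ≤ n`, and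
`2e_i` for `1 ≤ i ≤ n`. -/
def IsPosRoot (n : ℕ) (γ : Fin n → ℚ) : Prop :=
  (∃ i j : ℕ, 1 ≤ i ∧ i < j ∧ j ≤ n ∧ γ = e n i - e n j) ∨
  (∃ i j : ℕ, 1 ≤ i ∧ i < j ∧ j ≤ n ∧ γ = e n i + e n j) ∨
  (∃ i : ℕ, 1 ≤ i ∧ i ≤ n ∧ γ = (2 : ℚ) • e n i)

/-- The reflection in the root `γ`: `s_γ(δ) = δ − ⟨δ, γ^∨⟩·γ`. -/
def sRefl {n : ℕ} (γ δ : Fin n → ℚ) : Fin n → ℚ := δ - pairing δ γ • γ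

lemma ht_e {n a : ℕ} (h1 : 1 ≤ a) (h2 : a ≤ n) :
    ht (e n a) = (n : ℚ) - a + 1/2 := by
  unfold ht e
  rw [Finset.sum_eq_single (⟨a - 1, by omega⟩ : Fin n)]
  · simp only [Fin.val_mk]
    rw [if_pos (by omega), one_mul, Nat.cast_sub h1]
    push_cast; ring
  · intro b _ hb
    rw [if_neg, zero_mul]
    intro h
    apply hb
    apply Fin.ext
    simp only [Fin.val_mk]
    omega
  · intro h
    exact absurd (Finset.mem_univ _) h

lemma ht_add {n : ℕ} (x y : Fin n → ℚ) : ht (x + y) = ht x + ht y := by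
  simp [ht, add_mul, Finset.sum_add_distrib]

lemma ht_sub {n : ℕ} (x y : Fin n → ℚ) : ht (x - y) = ht x - ht y := by
  simp [ht, sub_mul, Finset.sum_sub_distrib]

lemma ht_neg {n : ℕ} (x : Fin n → ℚ) : ht (-x) = - ht x := by
  simp [ht, neg_mul, Finset.sum_neg_distrib]

lemma ht_smul {n : ℕ} (r : ℚ) (x : Fin n → ℚ) : ht (r • x) = r * ht x := by
  simp [ht, Finset.mul_sum, mul_assoc]

lemma ht_sub_smul {n : ℕ} (x y : Fin n → ℚ) (r : ℚ) :
    ht (x - r • y) = ht x - r * ht y := by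
  rw [ht_sub, ht_smul]

lemma e_coord {n i a : ℕ} (h1 : 1 ≤ i) (h : i - 1 < n) :
    e n a ⟨i - 1, h⟩ = if i = a then 1 else 0 := by
  unfold e
  simp only [Fin.val_mk]
  split_ifs with h1' h2' h3' <;> first | rfl | omega

lemma inn_two_e_self {n i : ℕ} (h1 : 1 ≤ i) (h2 : i ≤ n) :
    inn ((2 : ℚ) • e n i) ((2 : ℚ) • e n i) = 4 := by
  unfold inn e
  rw [Finset.sum_eq_single (⟨i - 1, by omega⟩ : Fin n)]
  · simp only [Pi.smul_apply, Fin.val_mk, smul_eq_mul]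
    rw [if_pos (by omega)]; norm_num
  · intro b _ hb
    simp only [Pi.smul_apply, smul_eq_mul]
    rw [if_neg]
    · ring
    · intro h
      exact hb (Fin.ext (by simp only [Fin.val_mk]; omega))
  · intro h
    exact absurd (Finset.mem_univ _) h

lemma inn_two_e {n i : ℕ} (h1 : 1 ≤ i) (h2 : i ≤ n) (x : Fin n → ℚ) :
    inn x ((2 : ℚ) • e n i) = 2 * x ⟨i - 1, by omega⟩ := by
  unfold inn e
  rw [Finset.sum_eq_single (⟨i - 1, by omega⟩ : Fin n)]
  · simp only [Pi.smul_apply, Fin.val_mk, smul_eq_mul]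
    rw [if_pos (by omega)]; ring
  · intro b _ hb
    simp only [Pi.smul_apply, smul_eq_mul]
    rw [if_neg]
    · ring
    · intro h
      exact hb (Fin.ext (by simp only [Fin.val_mk]; omega))
  · intro h
    exact absurd (Finset.mem_univ _) h

lemma pairing_two_e {n i : ℕ} (h1 : 1 ≤ i) (h2 : i ≤ n) (x : Fin n → ℚ) :
    pairing x ((2 : ℚ) • e n i) = x ⟨i - 1, by omega⟩ := by
  unfold pairing
  rw [inn_two_e_self h1 h2, inn_two_e h1 h2]
  ring

lemma ht_pos {n : ℕ} {γ : Fin n → ℚ} (h : IsPosRoot n γ) : 0 < ht γ := by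
  rcases h with ⟨a, b, h1, h2, h3, rfl⟩ | ⟨a, b, h1, h2, h3, rfl⟩ | ⟨a, h1, h2, rfl⟩
  · rw [ht_sub, ht_e h1 (by omega), ht_e (by omega) h3]
    have : (a : ℚ) < b := by exact_mod_cast h2
    linarith
  · rw [ht_add, ht_e h1 (by omega), ht_e (by omega) h3]
    have ha : (a : ℚ) < b := by exact_mod_cast h2
    have hb : (b : ℚ) ≤ n := by exact_mod_cast h3
    linarith
  · rw [ht_smul, ht_e h1 h2]
    have : (a : ℚ) ≤ n := by exact_mod_cast h2
    linarith

/-- Let `(γ₁, γ₂)` be the bad pair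
`γ₁ = α_i + ⋯ + α_{j−1} + 2(α_j + ⋯ + α_{n−1}) + β = e_i + e_j`,
`γ₂ = 2(α_i + ⋯ + α_{n−1}) + β = 2e_i` with `1 ≤ i < j ≤ n` in the root system `C_n`.
Let `ξ` be a positive root with `ht(γ₁) ≤ ht(ξ) < ht(γ₂)` such that `s_{γ₂}(ξ)` is a
negative root.  Then there exists `p` with `i < p ≤ j` such that
`ξ = α_i + ⋯ + α_{p−1} + 2(α_p + ⋯ + α_{n−1}) + β = e_i + e_p`. -/
theorem bad_pair_reflection_negative_classification
    (n i j : ℕ) (h1i : 1 ≤ i) (hij : i < j) (hjn : j ≤ n)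
    (ξ : Fin n → ℚ) (hξ : IsPosRoot n ξ)
    (hht₁ : ht (e n i + e n j) ≤ ht ξ)
    (hht₂ : ht ξ < ht ((2 : ℚ) • e n i))
    (hneg : IsPosRoot n (-(sRefl ((2 : ℚ) • e n i) ξ))) :
    ∃ p : ℕ, i < p ∧ p ≤ j ∧ ξ = e n i + e n p := by
  have hin : i ≤ n := by omega
  have hi1n : i - 1 < n := by omega
  -- Height of γ₂ is positive
  have hH : ht ((2 : ℚ) • e n i) = 2 * ((n : ℚ) - i) + 1 := by
    rw [ht_smul, ht_e h1i hin]; ring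
  have hin' : (i : ℚ) < n := by exact_mod_cast lt_of_lt_of_le hij hjn
  have hHpos : 0 < ht ((2 : ℚ) • e n i) := by rw [hH]; linarith
  -- Height of the reflected root is negative
  have hsneg : ht (sRefl ((2 : ℚ) • e n i) ξ) < 0 := by
    have := ht_pos hneg
    rw [ht_neg] at this; linarith
  rw [sRefl, pairing_two_e h1i hin, ht_sub_smul] at hsneg
  -- hsneg : ht ξ - ξ ⟨i-1⟩ * ht (2•e i) < 0
  have hjQ : (j : ℚ) ≤ n := by exact_mod_cast hjn
  have hijQ : (i : ℚ) < j := by exact_mod_cast hij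
  have hg1 : ht (e n i + e n j) = ((n : ℚ) - i + 1/2) + ((n : ℚ) - j + 1/2) := by
    rw [ht_add, ht_e h1i hin, ht_e (by omega) hjn]
  rcases hξ with ⟨a, b, ha1, hab, hbn, rfl⟩ | ⟨a, b, ha1, hab, hbn, rfl⟩ | ⟨a, ha1, han, rfl⟩
  · -- ξ = e a - e b : impossible
    exfalso
    have hcoord : (e n a - e n b) ⟨i - 1, hi1n⟩ =
        (if i = a then 1 else 0) - (if i = b then 1 else 0) := by
      simp [e_coord h1i hi1n]
    have hhtξ : ht (e n a - e n b) = (b : ℚ) - a := by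
      rw [ht_sub, ht_e ha1 (by omega), ht_e (by omega) hbn]; ring
    have haQ : (a : ℚ) < b := by exact_mod_cast hab
    have hbQ : (b : ℚ) ≤ n := by exact_mod_cast hbn
    rw [hcoord, hhtξ] at hsneg
    rw [hhtξ, hg1] at hht₁
    by_cases hia : i = a
    · subst hia
      have hib : ¬ (i = b) := by omega
      rw [if_pos rfl, if_neg hib] at hsneg
      -- hht₁ : 2n - i - j + 1 ≤ b - i, with b ≤ n, j ≤ n : contradiction
      linarith
    · rw [if_neg hia] at hsneg
      by_cases hib : i = b
      · rw [if_pos hib] at hsneg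
        rw [hH] at hsneg
        linarith
      · rw [if_neg hib] at hsneg
        linarith
  · -- ξ = e a + e b
    have hcoord : (e n a + e n b) ⟨i - 1, hi1n⟩ =
        (if i = a then 1 else 0) + (if i = b then 1 else 0) := by
      simp [e_coord h1i hi1n]
    have hhtξ : ht (e n a + e n b) = ((n : ℚ) - a + 1/2) + ((n : ℚ) - b + 1/2) := by
      rw [ht_add, ht_e ha1 (by omega), ht_e (by omega) hbn]
    have haQ : (a : ℚ) < b := by exact_mod_cast hab
    have hbQ : (b : ℚ) ≤ n := by exact_mod_cast hbn
    rw [hcoord, hhtξ] at hsneg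
    rw [hhtξ, hg1] at hht₁
    rw [hhtξ, hH] at hht₂
    by_cases hia : i = a
    · -- success case: p = b
      subst hia
      refine ⟨b, hab, ?_, rfl⟩
      -- from hht₁ : b ≤ j
      have : (b : ℚ) ≤ j := by linarith
      exact_mod_cast this
    · exfalso
      rw [if_neg hia] at hsneg
      by_cases hib : i = b
      · -- a < i, ht ξ too big
        subst hib
        have haiQ : (a : ℚ) < i := haQ
        linarith
      · rw [if_neg hib] at hsneg
        linarith
  · -- ξ = 2 e a
    exfalso
    have hcoord : ((2 : ℚ) • e n a) ⟨i - 1, hi1n⟩ =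
        2 * (if i = a then 1 else 0) := by
      simp [e_coord h1i hi1n]
    have hhtξ : ht ((2 : ℚ) • e n a) = 2 * ((n : ℚ) - a + 1/2) := by
      rw [ht_smul, ht_e ha1 han]
    have haQ : (a : ℚ) ≤ n := by exact_mod_cast han
    rw [hcoord, hhtξ] at hsneg
    rw [hhtξ, hg1] at hht₁
    rw [hhtξ, hH] at hht₂
    by_cases hia : i = a
    · subst hia
      linarith
    · rw [if_neg hia] at hsneg
      linarith

end CnRoots
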